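/- Let (Ω, P) be a probability space and let B : [0,1] × Ω → ℝ be a jointly measurable process such that each B_s is square-integrable and E[B_s B_t] = min(s,t) for all s,t ∈ [0,1]. Then for every integer n ≥ 1: E[ | n·∫₀¹ s^{2n} B_s² ds − B_1²/2 | ] ≤ 1/√(2n) + 1/(4n). -/

import Mathlib

open MeasureTheory ProbabilityTheory

lemma aux_abs_mul_le (u v p q : ℝ) (hp : 0 < p) (hq : 0 < q) (hpq : 1 ≤ p * q) :
    |u * v| ≤ (p * u ^ 2 + q * v ^ 2) / 2 := by
  have h1 : Real.sqrt p * Real.sqrt q = Real.sqrt (p * q) := (Real.sqrt_mul hp.le q).symm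
  have h2 : 1 ≤ Real.sqrt (p * q) := by
    rw [show (1 : ℝ) = Real.sqrt 1 from Real.sqrt_one.symm]
    exact Real.sqrt_le_sqrt hpq
  nlinarith [sq_nonneg (Real.sqrt p * |u| - Real.sqrt q * |v|), Real.sq_sqrt hp.le,
    Real.sq_sqrt hq.le, abs_nonneg u, abs_nonneg v, abs_mul u v, sq_abs u, sq_abs v,
    mul_nonneg (abs_nonneg u) (abs_nonneg v), Real.sqrt_nonneg p, Real.sqrt_nonneg q]

lemma aux_two_sqrt_le (x a c : ℝ) (hx : 0 ≤ x) (ha : 0 < a) (hc : 0 < c) (hac : 1 ≤ a * c) :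
    2 * Real.sqrt x ≤ a + c * x := by
  have h2 : Real.sqrt a * Real.sqrt (c * x) = Real.sqrt (a * c) * Real.sqrt x := by
    rw [← Real.sqrt_mul ha.le, ← Real.sqrt_mul (mul_nonneg ha.le hc.le)]; ring_nf
  have h3 : 1 ≤ Real.sqrt (a * c) := by
    rw [show (1 : ℝ) = Real.sqrt 1 from Real.sqrt_one.symm]
    exact Real.sqrt_le_sqrt hac
  nlinarith [sq_nonneg (Real.sqrt a - Real.sqrt (c * x)), Real.sq_sqrt ha.le,
    Real.sq_sqrt (mul_nonneg hc.le hx), Real.sqrt_nonneg x, Real.sqrt_nonneg (c * x),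
    Real.sqrt_nonneg a]

lemma aux_int_mul {Ω : Type*} [MeasureSpace Ω] {μ : Measure Ω} {f g : Ω → ℝ}
    (hf : MemLp f 2 μ) (hg : MemLp g 2 μ) : Integrable (fun ω => f ω * g ω) μ := by
  refine ((hf.integrable_sq.add hg.integrable_sq).div_const 2).mono'
    (hf.aestronglyMeasurable.mul hg.aestronglyMeasurable) ?_
  filter_upwards with ω
  simp only [Pi.add_apply, Real.norm_eq_abs]
  nlinarith [sq_nonneg (|f ω| - |g ω|), abs_mul (f ω) (g ω), sq_abs (f ω), sq_abs (g ω),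
    abs_nonneg (f ω), abs_nonneg (g ω)]

lemma aux_pow_int (m : ℕ) : ∫ s in Set.Ioo (0:ℝ) 1, s ^ m = 1 / (m + 1) := by
  rw [← MeasureTheory.integral_Ioc_eq_integral_Ioo,
    ← intervalIntegral.integral_of_le (zero_le_one), integral_pow]
  simp

lemma aux_key (x c : ℝ) (hx : 0 < x) (hc : 0 < c) (hcsq : c * c = x + 1) :
    c * (1 / x - 1 / (x + 1)) = c⁻¹ * (1 / x) := by
  have hx1 : x + 1 ≠ 0 := by positivity
  field_simp
  nlinarith [hcsq]

lemma aux_pow_integrable (m : ℕ) :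
    IntegrableOn (fun s : ℝ => s ^ m) (Set.Ioo (0:ℝ) 1) :=
  ((continuous_pow m).continuousOn.integrableOn_Icc).mono_set Set.Ioo_subset_Icc_self

set_option maxHeartbeats 1600000 in
theorem bm_quadratic_functional_L1_rate
    {Ω : Type*} [MeasureSpace Ω] [IsProbabilityMeasure (ℙ : Measure Ω)]
    (B : ℝ → Ω → ℝ)
    (hjm : Measurable fun p : Set.Icc (0 : ℝ) 1 × Ω => B (p.1 : ℝ) p.2)
    (hL2 : ∀ s ∈ Set.Icc (0 : ℝ) 1, MemLp (B s) 2 ℙ)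
    (hcov : ∀ s ∈ Set.Icc (0 : ℝ) 1, ∀ t ∈ Set.Icc (0 : ℝ) 1,
      ∫ ω, B s ω * B t ω ∂ℙ = min s t) :
    ∀ n : ℕ, 1 ≤ n →
      (∫ ω, |(n : ℝ) * (∫ s in Set.Ioo (0 : ℝ) 1, s ^ (2 * n) * (B s ω) ^ 2)
          - (B 1 ω) ^ 2 / 2| ∂ℙ)
        ≤ 1 / Real.sqrt (2 * n) + 1 / (4 * n) := by
  intro n hn
  have hn1 : (1 : ℝ) ≤ (n : ℝ) := by exact_mod_cast hn
  set m : ℕ := 2 * n with hm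
  have hmeven : Even m := even_two_mul n
  have h1 : (1 : ℝ) ∈ Set.Icc (0 : ℝ) 1 := ⟨zero_le_one, le_refl 1⟩
  set μ : Measure ℝ := volume.restrict (Set.Ioo (0 : ℝ) 1) with hμ
  -- the jointly measurable extension
  have hemb : MeasurableEmbedding
      (Prod.map ((↑) : Set.Icc (0:ℝ) 1 → ℝ) (id : Ω → Ω)) :=
    (MeasurableEmbedding.subtype_coe measurableSet_Icc).prodMap MeasurableEmbedding.id
  set F : ℝ × Ω → ℝ :=
    Function.extend (Prod.map ((↑) : Set.Icc (0:ℝ) 1 → ℝ) (id : Ω → Ω))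
      (fun p => B (p.1 : ℝ) p.2) 0 with hF
  have hFmeas : Measurable F := hemb.measurable_extend hjm measurable_const
  have hFeq : ∀ s : ℝ, s ∈ Set.Icc (0:ℝ) 1 → ∀ ω : Ω, F (s, ω) = B s ω := by
    intro s hs ω
    have h : (s, ω) = Prod.map ((↑) : Set.Icc (0:ℝ) 1 → ℝ) (id : Ω → Ω) (⟨s, hs⟩, ω) := rfl
    rw [hF, h, hemb.injective.extend_apply]
  have hB1m : Measurable (B 1) := by
    have h : B 1 = fun ω => F (1, ω) := by
      funext ω; exact (hFeq 1 h1 ω).symm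
    rw [h]
    exact hFmeas.comp (measurable_const.prodMk measurable_id)
  have hB1sq : Integrable (fun ω => B 1 ω ^ 2) ℙ := (hL2 1 h1).integrable_sq
  have hEB1sq : ∫ ω, B 1 ω ^ 2 ∂ℙ = 1 := by
    simp_rw [pow_two]
    rw [hcov 1 h1 1 h1]; simp
  -- covariance computations
  have hEs : ∀ s : ℝ, s ∈ Set.Icc (0:ℝ) 1 → ∫ ω, B s ω ^ 2 ∂ℙ = s := by
    intro s hs
    simp_rw [pow_two]
    rw [hcov s hs s hs, min_self]
  have hcross : ∀ s : ℝ, s ∈ Set.Icc (0:ℝ) 1 → ∫ ω, B s ω * B 1 ω ∂ℙ = s := by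
    intro s hs
    rw [hcov s hs 1 h1, min_eq_left hs.2]
  have hsub : ∀ s : ℝ, s ∈ Set.Icc (0:ℝ) 1 → ∫ ω, (B s ω - B 1 ω) ^ 2 ∂ℙ = 1 - s := by
    intro s hs
    have e1 : (fun ω => (B s ω - B 1 ω) ^ 2)
        = fun ω => (B s ω * B s ω - 2 * (B s ω * B 1 ω)) + B 1 ω * B 1 ω := by
      funext ω; ring
    have Ia : Integrable (fun ω => B s ω * B s ω) ℙ := aux_int_mul (hL2 s hs) (hL2 s hs)
    have Ib : Integrable (fun ω => B s ω * B 1 ω) ℙ := aux_int_mul (hL2 s hs) (hL2 1 h1)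
    have Ic : Integrable (fun ω => B 1 ω * B 1 ω) ℙ := aux_int_mul (hL2 1 h1) (hL2 1 h1)
    have Iab : Integrable (fun ω => B s ω * B s ω - 2 * (B s ω * B 1 ω)) ℙ :=
      Ia.sub (Ib.const_mul 2)
    rw [e1, integral_add Iab Ic, integral_sub Ia (Ib.const_mul 2),
      integral_const_mul, hcov s hs s hs, hcross s hs, hcov 1 h1 1 h1, min_self, min_self]
    ring
  have hadd : ∀ s : ℝ, s ∈ Set.Icc (0:ℝ) 1 → ∫ ω, (B s ω + B 1 ω) ^ 2 ∂ℙ = 3 * s + 1 := by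
    intro s hs
    have e1 : (fun ω => (B s ω + B 1 ω) ^ 2)
        = fun ω => (B s ω * B s ω + 2 * (B s ω * B 1 ω)) + B 1 ω * B 1 ω := by
      funext ω; ring
    have Ia : Integrable (fun ω => B s ω * B s ω) ℙ := aux_int_mul (hL2 s hs) (hL2 s hs)
    have Ib : Integrable (fun ω => B s ω * B 1 ω) ℙ := aux_int_mul (hL2 s hs) (hL2 1 h1)
    have Ic : Integrable (fun ω => B 1 ω * B 1 ω) ℙ := aux_int_mul (hL2 1 h1) (hL2 1 h1)
    have Iab : Integrable (fun ω => B s ω * B s ω + 2 * (B s ω * B 1 ω)) ℙ :=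
      Ia.add (Ib.const_mul 2)
    rw [e1, integral_add Iab Ic, integral_add Ia (Ib.const_mul 2),
      integral_const_mul, hcov s hs s hs, hcross s hs, hcov 1 h1 1 h1, min_self, min_self]
    ring
  -- the L¹ bound on |B_s² - B_1²|
  have habs : ∀ s : ℝ, s ∈ Set.Ioo (0:ℝ) 1 →
      ∫ ω, |B s ω ^ 2 - B 1 ω ^ 2| ∂ℙ ≤ 2 * Real.sqrt (1 - s) := by
    intro s hs
    have hsI : s ∈ Set.Icc (0:ℝ) 1 := Set.Ioo_subset_Icc_self hs
    set r : ℝ := Real.sqrt (1 - s) with hr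
    have hrpos : 0 < r := Real.sqrt_pos.mpr (by linarith [hs.2])
    set p : ℝ := 2 / r with hp
    set q : ℝ := r / 2 with hq
    have hppos : 0 < p := by positivity
    have hqpos : 0 < q := by positivity
    have hpq : 1 ≤ p * q := by
      have : p * q = 1 := by rw [hp, hq]; field_simp
      rw [this]
    have Isub : Integrable (fun ω => (B s ω - B 1 ω) ^ 2) ℙ :=
      ((hL2 s hsI).sub (hL2 1 h1)).integrable_sq
    have Iadd : Integrable (fun ω => (B s ω + B 1 ω) ^ 2) ℙ :=
      ((hL2 s hsI).add (hL2 1 h1)).integrable_sq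
    have Iabs : Integrable (fun ω => |B s ω ^ 2 - B 1 ω ^ 2|) ℙ :=
      ((hL2 s hsI).integrable_sq.sub hB1sq).abs
    have hpt : ∀ ω, |B s ω ^ 2 - B 1 ω ^ 2|
        ≤ (p * (B s ω - B 1 ω) ^ 2 + q * (B s ω + B 1 ω) ^ 2) / 2 := by
      intro ω
      have : B s ω ^ 2 - B 1 ω ^ 2 = (B s ω - B 1 ω) * (B s ω + B 1 ω) := by ring
      rw [this]
      exact aux_abs_mul_le _ _ _ _ hppos hqpos hpq
    have hle : ∫ ω, |B s ω ^ 2 - B 1 ω ^ 2| ∂ℙ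
        ≤ ∫ ω, (p * (B s ω - B 1 ω) ^ 2 + q * (B s ω + B 1 ω) ^ 2) / 2 ∂ℙ :=
      integral_mono Iabs (((Isub.const_mul p).add (Iadd.const_mul q)).div_const 2) hpt
    have hval : ∫ ω, (p * (B s ω - B 1 ω) ^ 2 + q * (B s ω + B 1 ω) ^ 2) / 2 ∂ℙ
        = (p * (1 - s) + q * (3 * s + 1)) / 2 := by
      rw [integral_div, integral_add (Isub.const_mul p) (Iadd.const_mul q),
        integral_const_mul, integral_const_mul, hsub s hsI, hadd s hsI]
    rw [hval] at hle
    refine hle.trans ?_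
    have h1s : p * (1 - s) = 2 * r := by
      have hdv : (1 - s) / r = r := by rw [hr]; exact Real.div_sqrt
      calc p * (1 - s) = 2 * ((1 - s) / r) := by rw [hp]; ring
        _ = 2 * r := by rw [hdv]
    have h2s : q * (3 * s + 1) ≤ 2 * r := by
      have : (3 : ℝ) * s + 1 ≤ 4 := by linarith [hs.2]
      calc q * (3 * s + 1) ≤ q * 4 := by nlinarith
        _ = 2 * r := by rw [hq]; ring
    linarith
  -- the dominating product-integrable function
  set H : ℝ × Ω → ℝ := fun p => F p ^ 2 + B 1 p.2 ^ 2 + 1 with hH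
  have hHmeas : Measurable H :=
    ((hFmeas.pow_const 2).add ((hB1m.comp measurable_snd).pow_const 2)).add measurable_const
  have hHnn : ∀ p, 0 ≤ H p := by
    intro p; rw [hH]; positivity
  have hHint : Integrable H (μ.prod ℙ) := by
    refine ⟨hHmeas.aestronglyMeasurable, ?_⟩
    rw [hasFiniteIntegral_def]
    rw [lintegral_prod _ hHmeas.enorm.aemeasurable]
    have hbnd : ∀ᵐ s ∂μ, (∫⁻ ω, (‖H (s, ω)‖₊ : ENNReal) ∂ℙ) ≤ ENNReal.ofReal 3 := by
      rw [hμ]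
      filter_upwards [ae_restrict_mem measurableSet_Ioo] with s hs
      have hsI : s ∈ Set.Icc (0:ℝ) 1 := Set.Ioo_subset_Icc_self hs
      have hHs : (fun ω => H (s, ω)) = fun ω => B s ω ^ 2 + B 1 ω ^ 2 + 1 := by
        funext ω; rw [hH]; simp only []; rw [hFeq s hsI ω]
      have hint : Integrable (fun ω => H (s, ω)) ℙ := by
        rw [hHs]
        exact ((hL2 s hsI).integrable_sq.add hB1sq).add (integrable_const 1)
      have hval : ∫ ω, H (s, ω) ∂ℙ = s + 1 + 1 := by
        have I1 : Integrable (fun ω => B s ω ^ 2 + B 1 ω ^ 2) ℙ :=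
          (hL2 s hsI).integrable_sq.add hB1sq
        rw [hHs, integral_add I1 (integrable_const 1),
          integral_add (hL2 s hsI).integrable_sq hB1sq, hEs s hsI, hEB1sq]
        simp
      have heq : (∫⁻ ω, (‖H (s, ω)‖₊ : ENNReal) ∂ℙ) = ENNReal.ofReal (∫ ω, H (s, ω) ∂ℙ) := by
        rw [ofReal_integral_eq_lintegral_ofReal hint (Filter.Eventually.of_forall fun ω => hHnn _)]
        congr 1
        funext ω
        exact Real.enorm_eq_ofReal (hHnn _)
      rw [heq, hval]
      exact ENNReal.ofReal_le_ofReal (by linarith [hsI.2])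
    calc ∫⁻ s, (∫⁻ ω, (‖H (s, ω)‖₊ : ENNReal) ∂ℙ) ∂μ
        ≤ ∫⁻ _, ENNReal.ofReal 3 ∂μ := lintegral_mono_ae hbnd
      _ = ENNReal.ofReal 3 * μ Set.univ := MeasureTheory.lintegral_const (ENNReal.ofReal 3)
      _ < ⊤ := by
          rw [hμ]
          simp [Real.volume_Ioo]
  -- a.e. membership of the first coordinate
  have hae_prod : ∀ᵐ p ∂(μ.prod (ℙ : Measure Ω)), p.1 ∈ Set.Ioo (0:ℝ) 1 := by
    rw [hμ, Measure.restrict_prod_eq_prod_univ]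
    filter_upwards [ae_restrict_mem (measurableSet_Ioo.prod MeasurableSet.univ)] with p hp
    exact hp.1
  -- the two product-integrable integrands
  set G : ℝ × Ω → ℝ := fun p => p.1 ^ m * |F p ^ 2 - B 1 p.2 ^ 2| with hG
  have hGmeas : Measurable G :=
    (measurable_fst.pow_const m).mul
      (((hFmeas.pow_const 2).sub ((hB1m.comp measurable_snd).pow_const 2)).abs)
  have hGnn : ∀ p, 0 ≤ G p := fun p => mul_nonneg (hmeven.pow_nonneg _) (abs_nonneg _)
  have hGint : Integrable G (μ.prod ℙ) := by
    refine hHint.mono' hGmeas.aestronglyMeasurable ?_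
    filter_upwards [hae_prod] with p hp
    rw [Real.norm_eq_abs, abs_of_nonneg (hGnn p)]
    simp only [hG, hH]
    have h01 : p.1 ^ m ≤ 1 := pow_le_one₀ hp.1.le hp.2.le
    have habs' : |F p ^ 2 - B 1 p.2 ^ 2| ≤ F p ^ 2 + B 1 p.2 ^ 2 :=
      (abs_sub _ _).trans (by rw [abs_of_nonneg (sq_nonneg _), abs_of_nonneg (sq_nonneg _)])
    nlinarith [hmeven.pow_nonneg p.1, abs_nonneg (F p ^ 2 - B 1 p.2 ^ 2)]
  set P : ℝ × Ω → ℝ := fun p => p.1 ^ m * F p ^ 2 with hP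
  have hPint : Integrable P (μ.prod ℙ) := by
    refine hHint.mono' ((measurable_fst.pow_const m).mul
      (hFmeas.pow_const 2)).aestronglyMeasurable ?_
    filter_upwards [hae_prod] with p hp
    rw [Real.norm_eq_abs]
    simp only [hP, hH]
    have h01 : p.1 ^ m ≤ 1 := pow_le_one₀ hp.1.le hp.2.le
    have hnn : 0 ≤ p.1 ^ m * F p ^ 2 := mul_nonneg (hmeven.pow_nonneg _) (sq_nonneg _)
    rw [abs_of_nonneg hnn]
    nlinarith [hmeven.pow_nonneg p.1, sq_nonneg (F p), sq_nonneg (B 1 p.2)]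
  have hae1 : ∀ᵐ ω ∂ℙ, Integrable (fun s => P (s, ω)) μ := hPint.prod_left_ae
  -- pointwise (in ω) bound
  have h2n1 : (0:ℝ) < 2 * (n:ℝ) + 1 := by linarith
  have hptw : ∀ᵐ ω ∂ℙ,
      |(n : ℝ) * (∫ s in Set.Ioo (0 : ℝ) 1, s ^ m * (B s ω) ^ 2) - (B 1 ω) ^ 2 / 2|
        ≤ (n : ℝ) * (∫ s in Set.Ioo (0:ℝ) 1, G (s, ω))
          + B 1 ω ^ 2 * (1 / (2 * (2 * (n:ℝ) + 1))) := by
    filter_upwards [hae1] with ω hω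
    have hA : (∫ s in Set.Ioo (0 : ℝ) 1, s ^ m * (B s ω) ^ 2)
        = ∫ s in Set.Ioo (0:ℝ) 1, s ^ m * F (s, ω) ^ 2 := by
      refine setIntegral_congr_fun measurableSet_Ioo (fun s hs => ?_)
      rw [hFeq s (Set.Ioo_subset_Icc_self hs) ω]
    have hconst : IntegrableOn (fun s : ℝ => s ^ m * B 1 ω ^ 2) (Set.Ioo (0:ℝ) 1) :=
      (aux_pow_integrable m).mul_const _
    have hωP : IntegrableOn (fun s => s ^ m * F (s, ω) ^ 2) (Set.Ioo (0:ℝ) 1) := hω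
    set K : ℝ := ∫ s in Set.Ioo (0:ℝ) 1, (s ^ m * F (s, ω) ^ 2 - s ^ m * B 1 ω ^ 2) with hK
    have hKeq : K = (∫ s in Set.Ioo (0:ℝ) 1, s ^ m * F (s, ω) ^ 2)
        - B 1 ω ^ 2 * (1 / (2 * (n:ℝ) + 1)) := by
      rw [hK, integral_sub hωP hconst]
      congr 1
      rw [integral_mul_const, aux_pow_int m]
      rw [hm]
      push_cast
      ring
    have hKabs : |K| ≤ ∫ s in Set.Ioo (0:ℝ) 1, G (s, ω) := by
      have h1' : |K| ≤ ∫ s in Set.Ioo (0:ℝ) 1,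
          ‖s ^ m * F (s, ω) ^ 2 - s ^ m * B 1 ω ^ 2‖ := by
        rw [hK, ← Real.norm_eq_abs]
        exact norm_integral_le_integral_norm _
      refine h1'.trans_eq ?_
      refine setIntegral_congr_fun measurableSet_Ioo (fun s hs => ?_)
      rw [Real.norm_eq_abs, hG]
      simp only []
      rw [show s ^ m * F (s, ω) ^ 2 - s ^ m * B 1 ω ^ 2
          = s ^ m * (F (s, ω) ^ 2 - B 1 ω ^ 2) by ring]
      rw [abs_mul, abs_of_nonneg (hmeven.pow_nonneg s)]
    have hval : (n : ℝ) * (∫ s in Set.Ioo (0 : ℝ) 1, s ^ m * (B s ω) ^ 2) - (B 1 ω) ^ 2 / 2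
        = (n:ℝ) * K - B 1 ω ^ 2 * (1 / (2 * (2 * (n:ℝ) + 1))) := by
      rw [hA]
      have : (∫ s in Set.Ioo (0:ℝ) 1, s ^ m * F (s, ω) ^ 2)
          = K + B 1 ω ^ 2 * (1 / (2 * (n:ℝ) + 1)) := by rw [hKeq]; ring
      rw [this]
      field_simp
      ring
    rw [hval]
    have hcnn : 0 ≤ B 1 ω ^ 2 * (1 / (2 * (2 * (n:ℝ) + 1))) := by positivity
    calc |(n:ℝ) * K - B 1 ω ^ 2 * (1 / (2 * (2 * (n:ℝ) + 1)))|
        ≤ |(n:ℝ) * K| + |B 1 ω ^ 2 * (1 / (2 * (2 * (n:ℝ) + 1)))| := abs_sub _ _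
      _ = (n:ℝ) * |K| + B 1 ω ^ 2 * (1 / (2 * (2 * (n:ℝ) + 1))) := by
          rw [abs_mul, abs_of_nonneg (by positivity : (0:ℝ) ≤ (n:ℝ)), abs_of_nonneg hcnn]
      _ ≤ (n : ℝ) * (∫ s in Set.Ioo (0:ℝ) 1, G (s, ω))
          + B 1 ω ^ 2 * (1 / (2 * (2 * (n:ℝ) + 1))) := by
          have := mul_le_mul_of_nonneg_left hKabs (by positivity : (0:ℝ) ≤ (n:ℝ))
          linarith
  -- integrate the pointwise bound
  have hbint : Integrable (fun ω => (n : ℝ) * (∫ s in Set.Ioo (0:ℝ) 1, G (s, ω))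
      + B 1 ω ^ 2 * (1 / (2 * (2 * (n:ℝ) + 1)))) ℙ := by
    refine Integrable.add ?_ (hB1sq.mul_const _)
    exact (hGint.integral_prod_right).const_mul _
  have hmain : (∫ ω, |(n : ℝ) * (∫ s in Set.Ioo (0 : ℝ) 1, s ^ m * (B s ω) ^ 2)
        - (B 1 ω) ^ 2 / 2| ∂ℙ)
      ≤ (n : ℝ) * (∫ ω, (∫ s in Set.Ioo (0:ℝ) 1, G (s, ω)) ∂ℙ)
        + 1 / (2 * (2 * (n:ℝ) + 1)) := by
    have h := integral_mono_of_nonneg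
      (Filter.Eventually.of_forall fun ω => abs_nonneg _) hbint hptw
    refine h.trans_eq ?_
    rw [integral_add ((hGint.integral_prod_right).const_mul _) (hB1sq.mul_const _),
      integral_const_mul, integral_mul_const, hEB1sq]
    ring
  -- Fubini
  have hswap : (∫ ω, (∫ s in Set.Ioo (0:ℝ) 1, G (s, ω)) ∂ℙ)
      = ∫ s in Set.Ioo (0:ℝ) 1, (∫ ω, G (s, ω) ∂ℙ) := by
    exact (integral_prod_symm G hGint).symm.trans (integral_prod G hGint)
  -- bound the inner expectation
  have hGsint : Integrable (fun s => ∫ ω, G (s, ω) ∂ℙ) μ := hGint.integral_prod_left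
  have hDint : IntegrableOn (fun s : ℝ => s ^ m * (2 * Real.sqrt (1 - s)))
      (Set.Ioo (0:ℝ) 1) := by
    have hcont : Continuous fun s : ℝ => s ^ m * (2 * Real.sqrt (1 - s)) :=
      (continuous_pow m).mul (continuous_const.mul
        (Real.continuous_sqrt.comp (continuous_const.sub continuous_id)))
    exact (hcont.continuousOn.integrableOn_Icc).mono_set Set.Ioo_subset_Icc_self
  have hstep : ∫ s in Set.Ioo (0:ℝ) 1, (∫ ω, G (s, ω) ∂ℙ)
      ≤ ∫ s in Set.Ioo (0:ℝ) 1, s ^ m * (2 * Real.sqrt (1 - s)) := by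
    refine integral_mono_ae hGsint hDint ?_
    filter_upwards [ae_restrict_mem measurableSet_Ioo] with s hs
    have hsI : s ∈ Set.Icc (0:ℝ) 1 := Set.Ioo_subset_Icc_self hs
    have hGs : (fun ω => G (s, ω)) = fun ω => s ^ m * |B s ω ^ 2 - B 1 ω ^ 2| := by
      funext ω; rw [hG]; simp only []; rw [hFeq s hsI ω]
    rw [hGs, integral_const_mul]
    exact mul_le_mul_of_nonneg_left (habs s hs) (hmeven.pow_nonneg s)
  -- deterministic integral bound
  obtain ⟨c, hc⟩ : ∃ x : ℝ, x = Real.sqrt (2 * (n:ℝ) + 2) := ⟨_, rfl⟩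
  have hcpos : 0 < c := hc ▸ Real.sqrt_pos.mpr (by linarith)
  obtain ⟨a, ha⟩ : ∃ x : ℝ, x = c⁻¹ := ⟨_, rfl⟩
  have hapos : 0 < a := ha ▸ inv_pos.mpr hcpos
  have hac : a * c = 1 := by rw [ha]; exact inv_mul_cancel₀ hcpos.ne'
  have hcsq : c * c = 2 * (n:ℝ) + 2 := by rw [hc]; exact Real.mul_self_sqrt (by linarith)
  have hdet : ∫ s in Set.Ioo (0:ℝ) 1, s ^ m * (2 * Real.sqrt (1 - s))
      ≤ a * (1 / ((m:ℝ) + 1)) + c * (1 / ((m:ℝ) + 1) - 1 / ((m:ℝ) + 1 + 1)) := by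
    have hsubint : IntegrableOn (fun s : ℝ => s ^ m - s ^ (m + 1)) (Set.Ioo (0:ℝ) 1) :=
      (aux_pow_integrable m).sub (aux_pow_integrable (m+1))
    have hrhs : IntegrableOn (fun s : ℝ => a * s ^ m + c * (s ^ m - s ^ (m + 1)))
        (Set.Ioo (0:ℝ) 1) :=
      ((aux_pow_integrable m).const_mul a).add (hsubint.const_mul c)
    have hle : ∫ s in Set.Ioo (0:ℝ) 1, s ^ m * (2 * Real.sqrt (1 - s))
        ≤ ∫ s in Set.Ioo (0:ℝ) 1, (a * s ^ m + c * (s ^ m - s ^ (m + 1))) := by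
      refine integral_mono_ae hDint hrhs ?_
      filter_upwards [ae_restrict_mem measurableSet_Ioo] with s hs
      have h2s : 2 * Real.sqrt (1 - s) ≤ a + c * (1 - s) :=
        aux_two_sqrt_le (1 - s) a c (by linarith [hs.2]) hapos hcpos hac.ge
      have hpow : (0:ℝ) ≤ s ^ m := hmeven.pow_nonneg s
      calc s ^ m * (2 * Real.sqrt (1 - s)) ≤ s ^ m * (a + c * (1 - s)) :=
            mul_le_mul_of_nonneg_left h2s hpow
        _ = a * s ^ m + c * (s ^ m - s ^ (m + 1)) := by ring
    refine hle.trans_eq ?_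
    rw [integral_add ((aux_pow_integrable m).const_mul a) (hsubint.const_mul c),
      integral_const_mul, integral_const_mul,
      integral_sub (aux_pow_integrable m) (aux_pow_integrable (m+1)),
      aux_pow_int m, aux_pow_int (m+1)]
    push_cast
    ring
  -- final numeric computation
  have hmr : (m : ℝ) = 2 * (n:ℝ) := by rw [hm]; push_cast; ring
  have hfin : (n:ℝ) * (a * (1 / ((m:ℝ) + 1)) + c * (1 / ((m:ℝ) + 1) - 1 / ((m:ℝ) + 1 + 1)))
      + 1 / (2 * (2 * (n:ℝ) + 1)) ≤ 1 / Real.sqrt (2 * n) + 1 / (4 * n) := by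
    rw [hmr]
    have h2n2 : (0:ℝ) < 2 * (n:ℝ) + 2 := by linarith
    have hkey : c * (1 / (2 * (n:ℝ) + 1) - 1 / (2 * (n:ℝ) + 1 + 1)) = a * (1 / (2 * (n:ℝ) + 1)) := by
      rw [ha]
      exact aux_key (2 * (n:ℝ) + 1) c h2n1 hcpos (by rw [hcsq]; ring)
    rw [hkey]
    have hD' : (n:ℝ) * (a * (1 / (2 * (n:ℝ) + 1)) + a * (1 / (2 * (n:ℝ) + 1))) ≤ a := by
      rw [show a * (1 / (2 * (n:ℝ) + 1)) + a * (1 / (2 * (n:ℝ) + 1))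
          = 2 * a / (2 * (n:ℝ) + 1) by ring]
      rw [mul_div_assoc']
      rw [div_le_iff₀ h2n1]
      nlinarith [hapos.le]
    have hsq2n : 0 < Real.sqrt (2 * (n:ℝ)) := Real.sqrt_pos.mpr (by linarith)
    have hsle : Real.sqrt (2 * (n:ℝ)) ≤ c := by
      rw [hc]; exact Real.sqrt_le_sqrt (by linarith)
    have h1 : a ≤ 1 / Real.sqrt (2 * (n:ℝ)) := by
      rw [ha, ← one_div]
      exact one_div_le_one_div_of_le hsq2n hsle
    have h2 : 1 / (2 * (2 * (n:ℝ) + 1)) ≤ 1 / (4 * (n:ℝ)) := by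
      apply one_div_le_one_div_of_le (by linarith) (by linarith)
    push_cast
    linarith
  calc (∫ ω, |(n : ℝ) * (∫ s in Set.Ioo (0 : ℝ) 1, s ^ (2 * n) * (B s ω) ^ 2)
        - (B 1 ω) ^ 2 / 2| ∂ℙ)
      ≤ (n : ℝ) * (∫ ω, (∫ s in Set.Ioo (0:ℝ) 1, G (s, ω)) ∂ℙ)
        + 1 / (2 * (2 * (n:ℝ) + 1)) := hmain
    _ = (n : ℝ) * (∫ s in Set.Ioo (0:ℝ) 1, (∫ ω, G (s, ω) ∂ℙ))
        + 1 / (2 * (2 * (n:ℝ) + 1)) := by rw [hswap]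
    _ ≤ (n : ℝ) * (∫ s in Set.Ioo (0:ℝ) 1, s ^ m * (2 * Real.sqrt (1 - s)))
        + 1 / (2 * (2 * (n:ℝ) + 1)) := by
        have := mul_le_mul_of_nonneg_left hstep (by positivity : (0:ℝ) ≤ (n:ℝ))
        linarith
    _ ≤ (n:ℝ) * (a * (1 / ((m:ℝ) + 1)) + c * (1 / ((m:ℝ) + 1) - 1 / ((m:ℝ) + 1 + 1)))
        + 1 / (2 * (2 * (n:ℝ) + 1)) := by
        have := mul_le_mul_of_nonneg_left hdet (by positivity : (0:ℝ) ≤ (n:ℝ))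
        linarith
    _ ≤ 1 / Real.sqrt (2 * n) + 1 / (4 * n) := hfin
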